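/- Lemma D.1 (expected norm of a product of random matrices). Let Y_1, Y_2, … be a sequence of mutually independent, symmetric random matrices in ℝ^{d×d} and define Z_0 = I and Z_i = Y_i Z_{i−1} for i ≥ 1. Suppose there exist μ and σ² such that ‖E[Y_i]‖ ≤ 1 − μ (operator norm) and E[‖Y_i − E[Y_i]‖₂²] ≤ σ² (Schatten-2 / Frobenius norm) for every i, and (1 − μ)² + σ² < 1. Then for every t ≥ 0, E[‖Z_t‖²] ≤ E[‖Z_t‖₂²] ≤ d·((1 − μ)² + σ²)^t. -/

import Mathlib

open MeasureTheory ProbabilityTheory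

noncomputable section

/-- The squared Schatten-2 (Frobenius) norm of an operator on `ℝ^d`,
`‖A‖₂² = ∑_j ‖A e_j‖²`. -/
def frobSq {d : ℕ} (A : EuclideanSpace ℝ (Fin d) →L[ℝ] EuclideanSpace ℝ (Fin d)) : ℝ :=
  ∑ j : Fin d, ‖A (EuclideanSpace.single j 1)‖ ^ 2

namespace LemmaD1Aux

lemma frobSq_nonneg {d : ℕ} (A : EuclideanSpace ℝ (Fin d) →L[ℝ] EuclideanSpace ℝ (Fin d)) :
    0 ≤ frobSq A := Finset.sum_nonneg fun _ _ => by positivity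

lemma frobSq_one {d : ℕ} :
    frobSq (1 : EuclideanSpace ℝ (Fin d) →L[ℝ] EuclideanSpace ℝ (Fin d)) = d := by
  simp [frobSq]

lemma sum_single' {d : ℕ} (v : EuclideanSpace ℝ (Fin d)) :
    ∑ j : Fin d, (v j) • (EuclideanSpace.single j (1:ℝ)) = v := by
  ext k
  have h : (∑ j : Fin d, (v j) • (EuclideanSpace.single j (1:ℝ))) k
      = ∑ j : Fin d, ((v j) • (EuclideanSpace.single j (1:ℝ))) k :=
    by rw [WithLp.ofLp_sum]; exact Finset.sum_apply k Finset.univ _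
  rw [h]
  simp [EuclideanSpace.single_apply]

lemma apply_sq_le {d : ℕ} (A : EuclideanSpace ℝ (Fin d) →L[ℝ] EuclideanSpace ℝ (Fin d))
    (v : EuclideanSpace ℝ (Fin d)) : ‖A v‖ ^ 2 ≤ frobSq A * ‖v‖ ^ 2 := by
  have h1 : A v = ∑ j : Fin d, (v j) • A (EuclideanSpace.single j 1) := by
    conv_lhs => rw [← sum_single' v]
    rw [map_sum]
    simp
  have h2 : ‖A v‖ ≤ ∑ j : Fin d, |v j| * ‖A (EuclideanSpace.single j 1)‖ := by
    rw [h1]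
    refine (norm_sum_le _ _).trans ?_
    refine Finset.sum_le_sum fun j _ => ?_
    rw [norm_smul]; simp [Real.norm_eq_abs]
  have h3 : (∑ j : Fin d, |v j| * ‖A (EuclideanSpace.single j 1)‖) ^ 2
      ≤ (∑ j : Fin d, |v j| ^ 2) * ∑ j : Fin d, ‖A (EuclideanSpace.single j 1)‖ ^ 2 :=
    Finset.sum_mul_sq_le_sq_mul_sq Finset.univ _ _
  have hv : ∑ j : Fin d, |v j| ^ 2 = ‖v‖ ^ 2 := by
    rw [EuclideanSpace.norm_eq, Real.sq_sqrt (by positivity)]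
    simp [sq_abs]
  calc ‖A v‖ ^ 2 ≤ (∑ j : Fin d, |v j| * ‖A (EuclideanSpace.single j 1)‖) ^ 2 :=
        pow_le_pow_left₀ (norm_nonneg _) h2 2
    _ ≤ (∑ j : Fin d, |v j| ^ 2) * ∑ j : Fin d, ‖A (EuclideanSpace.single j 1)‖ ^ 2 := h3
    _ = frobSq A * ‖v‖ ^ 2 := by rw [hv, frobSq, mul_comm]

lemma norm_sq_le_frobSq {d : ℕ} (A : EuclideanSpace ℝ (Fin d) →L[ℝ] EuclideanSpace ℝ (Fin d)) :
    ‖A‖ ^ 2 ≤ frobSq A := by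
  have h : ‖A‖ ≤ Real.sqrt (frobSq A) := by
    apply ContinuousLinearMap.opNorm_le_bound _ (Real.sqrt_nonneg _)
    intro v
    have h1 := apply_sq_le A v
    have h2 : ‖A v‖ ^ 2 ≤ (Real.sqrt (frobSq A) * ‖v‖) ^ 2 := by
      rw [mul_pow, Real.sq_sqrt (frobSq_nonneg A)]; exact h1
    exact (pow_le_pow_iff_left₀ (norm_nonneg _) (by positivity) two_ne_zero).mp h2
  calc ‖A‖ ^ 2 ≤ Real.sqrt (frobSq A) ^ 2 := pow_le_pow_left₀ (norm_nonneg _) h 2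
    _ = frobSq A := Real.sq_sqrt (frobSq_nonneg A)

lemma continuous_frobSq {d : ℕ} : Continuous (@frobSq d) := by
  unfold frobSq; fun_prop

/-- One-step second-moment bound for a single random matrix applied to a fixed vector. -/
lemma step_bound {d : ℕ} {Ω : Type*} [MeasurableSpace Ω] {μ : Measure Ω}
    [IsProbabilityMeasure μ]
    (W : Ω → (EuclideanSpace ℝ (Fin d) →L[ℝ] EuclideanSpace ℝ (Fin d)))
    (hW : MemLp W 2 μ) (a s : ℝ) (ha : ‖∫ ω, W ω ∂μ‖ ≤ a)
    (hs : (∫ ω, frobSq (W ω - ∫ ω', W ω' ∂μ) ∂μ) ≤ s) (v : EuclideanSpace ℝ (Fin d)) :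
    Integrable (fun ω => ‖W ω v‖ ^ 2) μ ∧
    (∫ ω, ‖W ω v‖ ^ 2 ∂μ) ≤ (a ^ 2 + s) * ‖v‖ ^ 2 := by
  set m : EuclideanSpace ℝ (Fin d) →L[ℝ] EuclideanSpace ℝ (Fin d) := ∫ ω, W ω ∂μ with hm
  have hWi : Integrable W μ := hW.integrable one_le_two
  have hD : MemLp (fun ω => W ω - m) 2 μ := hW.sub (memLp_const m)
  have hDi : Integrable (fun ω => W ω - m) μ := hD.integrable one_le_two
  have hmeasD : AEStronglyMeasurable (fun ω => W ω - m) μ := hD.aestronglyMeasurable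
  have hDnormsq : Integrable (fun ω => ‖W ω - m‖ ^ 2) μ :=
    (memLp_two_iff_integrable_sq_norm hmeasD).mp hD
  have hintD : (∫ ω, (W ω - m) ∂μ) = 0 := by
    rw [integral_sub hWi (integrable_const m), integral_const]
    simp [hm]
  have hDv_sq_int : Integrable (fun ω => ‖(W ω - m) v‖ ^ 2) μ := by
    refine (hDnormsq.const_mul (‖v‖ ^ 2)).mono' ?_ ?_
    · apply AEStronglyMeasurable.pow
      apply AEStronglyMeasurable.norm
      exact (ContinuousLinearMap.apply ℝ
        (EuclideanSpace ℝ (Fin d)) v).continuous.comp_aestronglyMeasurable hmeasD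
    · filter_upwards with ω
      rw [Real.norm_eq_abs, abs_of_nonneg (by positivity)]
      calc ‖(W ω - m) v‖ ^ 2 ≤ (‖W ω - m‖ * ‖v‖) ^ 2 :=
            pow_le_pow_left₀ (norm_nonneg _) ((W ω - m).le_opNorm v) 2
        _ = ‖v‖ ^ 2 * ‖W ω - m‖ ^ 2 := by ring
  have hDv_int : Integrable (fun ω => (W ω - m) v) μ :=
    (ContinuousLinearMap.apply ℝ (EuclideanSpace ℝ (Fin d)) v).integrable_comp hDi
  have hcross_int : Integrable (fun ω => 2 * (inner ℝ (m v) ((W ω - m) v) : ℝ)) μ :=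
    (hDv_int.const_inner (m v)).const_mul 2
  have hexp : ∀ ω, ‖W ω v‖ ^ 2
      = ‖(W ω - m) v‖ ^ 2 + 2 * (inner ℝ (m v) ((W ω - m) v) : ℝ) + ‖m v‖ ^ 2 := by
    intro ω
    have h0 : W ω v = (W ω - m) v + m v := by simp
    rw [h0, norm_add_sq_real, real_inner_comm]
  have hint : Integrable (fun ω => ‖W ω v‖ ^ 2) μ := by
    have h0 : (fun ω => ‖W ω v‖ ^ 2) = fun ω =>
        ‖(W ω - m) v‖ ^ 2 + 2 * (inner ℝ (m v) ((W ω - m) v) : ℝ) + ‖m v‖ ^ 2 := funext hexp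
    rw [h0]
    exact (hDv_sq_int.add hcross_int).add (integrable_const _)
  refine ⟨hint, ?_⟩
  have hDvint0 : (∫ ω, (W ω - m) v ∂μ) = 0 := by
    rw [← ContinuousLinearMap.integral_apply hDi v, hintD]
    simp
  have hcross_zero : (∫ ω, 2 * (inner ℝ (m v) ((W ω - m) v) : ℝ) ∂μ) = 0 := by
    rw [integral_const_mul, integral_inner hDv_int, hDvint0]
    simp
  have hfrob_int : Integrable (fun ω => frobSq (W ω - m)) μ := by
    unfold frobSq
    apply integrable_finset_sum
    intro j _
    refine (hDnormsq.const_mul 1).mono' ?_ ?_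
    · apply AEStronglyMeasurable.pow
      apply AEStronglyMeasurable.norm
      exact (ContinuousLinearMap.apply ℝ
        (EuclideanSpace ℝ (Fin d)) _).continuous.comp_aestronglyMeasurable hmeasD
    · filter_upwards with ω
      rw [Real.norm_eq_abs, abs_of_nonneg (by positivity), one_mul]
      calc ‖(W ω - m) (EuclideanSpace.single j 1)‖ ^ 2
          ≤ (‖W ω - m‖ * ‖EuclideanSpace.single j 1‖) ^ 2 :=
            pow_le_pow_left₀ (norm_nonneg _) ((W ω - m).le_opNorm _) 2
        _ ≤ ‖W ω - m‖ ^ 2 := by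
            rw [EuclideanSpace.norm_single, norm_one, mul_one]
  calc (∫ ω, ‖W ω v‖ ^ 2 ∂μ)
      = (∫ ω, ‖(W ω - m) v‖ ^ 2 ∂μ) + (∫ ω, 2 * (inner ℝ (m v) ((W ω - m) v) : ℝ) ∂μ)
        + ‖m v‖ ^ 2 := by
        have e1 : (∫ ω, (‖(W ω - m) v‖ ^ 2 + 2 * (inner ℝ (m v) ((W ω - m) v) : ℝ)
              + ‖m v‖ ^ 2) ∂μ)
            = (∫ ω, (‖(W ω - m) v‖ ^ 2 + 2 * (inner ℝ (m v) ((W ω - m) v) : ℝ)) ∂μ)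
              + ‖m v‖ ^ 2 := by
          rw [MeasureTheory.integral_add
            (f := fun ω => ‖(W ω - m) v‖ ^ 2 + 2 * (inner ℝ (m v) ((W ω - m) v) : ℝ))
            (g := fun _ => ‖m v‖ ^ 2)
            (hDv_sq_int.add hcross_int) (integrable_const _), integral_const]
          simp
        have e2 : (∫ ω, (‖(W ω - m) v‖ ^ 2 + 2 * (inner ℝ (m v) ((W ω - m) v) : ℝ)) ∂μ)
            = (∫ ω, ‖(W ω - m) v‖ ^ 2 ∂μ)
              + (∫ ω, 2 * (inner ℝ (m v) ((W ω - m) v) : ℝ) ∂μ) :=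
          integral_add hDv_sq_int hcross_int
        rw [integral_congr_ae (Filter.Eventually.of_forall hexp), e1, e2]
    _ = (∫ ω, ‖(W ω - m) v‖ ^ 2 ∂μ) + ‖m v‖ ^ 2 := by rw [hcross_zero]; ring
    _ ≤ (∫ ω, frobSq (W ω - m) * ‖v‖ ^ 2 ∂μ) + a ^ 2 * ‖v‖ ^ 2 := by
        refine add_le_add
          (integral_mono hDv_sq_int (hfrob_int.mul_const _) fun ω => apply_sq_le _ v) ?_
        calc ‖m v‖ ^ 2 ≤ (‖m‖ * ‖v‖) ^ 2 := pow_le_pow_left₀ (norm_nonneg _) (m.le_opNorm v) 2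
          _ ≤ (a * ‖v‖) ^ 2 := pow_le_pow_left₀ (by positivity)
              (mul_le_mul_of_nonneg_right ha (norm_nonneg _)) 2
          _ = a ^ 2 * ‖v‖ ^ 2 := by ring
    _ ≤ s * ‖v‖ ^ 2 + a ^ 2 * ‖v‖ ^ 2 := by
        gcongr
        rw [integral_mul_const]
        exact mul_le_mul_of_nonneg_right hs (by positivity)
    _ = (a ^ 2 + s) * ‖v‖ ^ 2 := by ring

lemma iIndepFun_congr' {Ω : Type*} [MeasurableSpace Ω] {μ : Measure Ω} {β : Type*}
    [m : MeasurableSpace β] {f g : ℕ → Ω → β}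
    (hf : iIndepFun (m := fun _ => m) f μ) (h : ∀ i, f i =ᵐ[μ] g i) :
    iIndepFun (m := fun _ => m) g μ := by
  rw [iIndepFun_iff_measure_inter_preimage_eq_mul] at hf ⊢
  intro S sets hmeas
  have hset : ∀ i (s : Set β), (f i ⁻¹' s : Set Ω) =ᵐ[μ] (g i ⁻¹' s : Set Ω) := by
    intro i s
    apply Filter.eventuallyEq_set.mpr
    filter_upwards [h i] with ω hω
    simp only [Set.mem_preimage, hω]
  have h1 : (⋂ i ∈ S, f i ⁻¹' sets i : Set Ω) =ᵐ[μ] (⋂ i ∈ S, g i ⁻¹' sets i : Set Ω) := by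
    have hall : ∀ᵐ ω ∂μ, ∀ i ∈ S, f i ω = g i ω :=
      (Filter.eventually_all_finset S).mpr fun i _ => h i
    apply Filter.eventuallyEq_set.mpr
    filter_upwards [hall] with ω hω
    simp only [Set.mem_iInter, Set.mem_preimage]
    exact ⟨fun hh i hi => (hω i hi) ▸ hh i hi, fun hh i hi => (hω i hi).symm ▸ hh i hi⟩
  rw [measure_congr h1.symm, hf S hmeas]
  exact Finset.prod_congr rfl fun i _ => measure_congr (hset i (sets i))

lemma indep_mono' {Ω : Type*} [mΩ : MeasurableSpace Ω] {μ : Measure Ω}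
    {m₁ m₂ m₁' m₂' : MeasurableSpace Ω} (h : Indep m₁ m₂ μ) (h1 : m₁' ≤ m₁) (h2 : m₂' ≤ m₂) :
    Indep m₁' m₂' μ := by
  rw [Indep_iff] at h ⊢
  intro t1 t2 ht1 ht2
  exact h t1 t2 (h1 _ ht1) (h2 _ ht2)

/-- The (reversed) partial products of a sequence of random matrices. -/
def prodZ {d : ℕ} {Ω : Type*}
    (Y : ℕ → Ω → (EuclideanSpace ℝ (Fin d) →L[ℝ] EuclideanSpace ℝ (Fin d))) :
    ℕ → Ω → (EuclideanSpace ℝ (Fin d) →L[ℝ] EuclideanSpace ℝ (Fin d))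
  | 0 => fun _ => 1
  | (t+1) => fun ω => Y (t+1) ω * prodZ Y t ω

end LemmaD1Aux

open LemmaD1Aux

/-- **Lemma D.1** (expected norm of a product of random matrices).  The operator space
`ℝ^d →L ℝ^d` is endowed with its Borel σ-algebra. -/
theorem lemma_D_1 {d : ℕ}
    [mM : MeasurableSpace (EuclideanSpace ℝ (Fin d) →L[ℝ] EuclideanSpace ℝ (Fin d))]
    [BorelSpace (EuclideanSpace ℝ (Fin d) →L[ℝ] EuclideanSpace ℝ (Fin d))]
    {Ω : Type*} [MeasurableSpace Ω] (μ : Measure Ω) [IsProbabilityMeasure μ]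
    (Y : ℕ → Ω → (EuclideanSpace ℝ (Fin d) →L[ℝ] EuclideanSpace ℝ (Fin d)))
    (Z : ℕ → Ω → (EuclideanSpace ℝ (Fin d) →L[ℝ] EuclideanSpace ℝ (Fin d)))
    (μ' σ2 : ℝ)
    -- the `Y i` are mutually independent, symmetric, square-integrable random matrices
    (hindep : iIndepFun (m := fun _ => mM) Y μ)
    (hsym : ∀ i ω, IsSelfAdjoint (Y i ω))
    (hL2 : ∀ i, MemLp (Y i) 2 μ)
    -- `Z_0 = I` and `Z_i = Y_i Z_{i-1}`
    (hZ0 : ∀ ω, Z 0 ω = 1)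
    (hZ : ∀ i ω, Z (i + 1) ω = Y (i + 1) ω * Z i ω)
    -- mean and variance bounds
    (hmean : ∀ i, ‖∫ ω, Y i ω ∂μ‖ ≤ 1 - μ')
    (hvar : ∀ i, (∫ ω, frobSq (Y i ω - ∫ ω', Y i ω' ∂μ) ∂μ) ≤ σ2)
    (hcontract : (1 - μ') ^ 2 + σ2 < 1) :
    ∀ t : ℕ,
      (∫ ω, ‖Z t ω‖ ^ 2 ∂μ) ≤ ∫ ω, frobSq (Z t ω) ∂μ ∧
      (∫ ω, frobSq (Z t ω) ∂μ) ≤ d * ((1 - μ') ^ 2 + σ2) ^ t := by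
  set c : ℝ := (1 - μ') ^ 2 + σ2 with hcdef
  have hσ2 : 0 ≤ σ2 :=
    le_trans (integral_nonneg fun ω => frobSq_nonneg _) (hvar 0)
  have hc0 : 0 ≤ c := add_nonneg (sq_nonneg _) hσ2
  -- measurable modifications of the `Y i`
  set Y' : ℕ → Ω → (EuclideanSpace ℝ (Fin d) →L[ℝ] EuclideanSpace ℝ (Fin d)) :=
    fun i => ((hL2 i).aestronglyMeasurable).mk (Y i) with hY'def
  have hY'ae : ∀ i, Y i =ᵐ[μ] Y' i := fun i => ((hL2 i).aestronglyMeasurable).ae_eq_mk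
  have hY'meas : ∀ i, Measurable (Y' i) :=
    fun i => ((hL2 i).aestronglyMeasurable).stronglyMeasurable_mk.measurable
  have hL2' : ∀ i, MemLp (Y' i) 2 μ := fun i => (hL2 i).ae_eq (hY'ae i)
  have hYint' : ∀ i, (∫ ω, Y' i ω ∂μ) = ∫ ω, Y i ω ∂μ :=
    fun i => integral_congr_ae (hY'ae i).symm
  have hmean' : ∀ i, ‖∫ ω, Y' i ω ∂μ‖ ≤ 1 - μ' := fun i => by rw [hYint']; exact hmean i
  have hvar' : ∀ i, (∫ ω, frobSq (Y' i ω - ∫ ω', Y' i ω' ∂μ) ∂μ) ≤ σ2 := by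
    intro i
    have : (∫ ω, frobSq (Y' i ω - ∫ ω', Y' i ω' ∂μ) ∂μ)
        = ∫ ω, frobSq (Y i ω - ∫ ω', Y i ω' ∂μ) ∂μ := by
      refine integral_congr_ae ?_
      filter_upwards [hY'ae i] with ω hω
      rw [hYint', hω]
    rw [this]; exact hvar i
  have hindep' : iIndepFun (m := fun _ => mM) Y' μ := iIndepFun_congr' hindep hY'ae
  -- the products of the modifications
  have hPmeas : ∀ t, Measurable (prodZ Y' t) := by
    intro t
    induction t with
    | zero => exact measurable_const
    | succ t ih => exact (hY'meas (t+1)).mul ih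
  have hZ'ae : ∀ t, Z t =ᵐ[μ] prodZ Y' t := by
    intro t
    induction t with
    | zero => exact Filter.Eventually.of_forall fun ω => by rw [hZ0]; rfl
    | succ t ih =>
        filter_upwards [hY'ae (t+1), ih] with ω h1 h2
        rw [hZ t ω, h1, h2]; rfl
  -- one-step moment bound
  have hstep : ∀ i (v : EuclideanSpace ℝ (Fin d)),
      Integrable (fun ω => ‖Y' i ω v‖ ^ 2) μ ∧
      (∫ ω, ‖Y' i ω v‖ ^ 2 ∂μ) ≤ c * ‖v‖ ^ 2 :=
    fun i v => step_bound (Y' i) (hL2' i) (1 - μ') σ2 (hmean' i) (hvar' i) v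
  -- independence of `Y' (t+1)` and `prodZ Y' t`
  have hcomap_le : ∀ i,
      MeasurableSpace.comap (Y' i) mM ≤ (inferInstance : MeasurableSpace Ω) :=
    fun i => measurable_iff_comap_le.mp (hY'meas i)
  have hmeas_sup : ∀ t, Measurable[⨆ i ∈ Set.Icc 1 t, MeasurableSpace.comap (Y' i) mM]
      (prodZ Y' t) := by
    intro t
    induction t with
    | zero => exact measurable_const
    | succ t ih =>
        have h1 : Measurable[⨆ i ∈ Set.Icc 1 (t+1), MeasurableSpace.comap (Y' i) mM]
            (Y' (t+1)) := by
          refine Measurable.of_comap_le ?_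
          exact le_biSup (fun i => MeasurableSpace.comap (Y' i) mM)
            (Set.mem_Icc.mpr ⟨by omega, le_rfl⟩)
        have h2 : Measurable[⨆ i ∈ Set.Icc 1 (t+1), MeasurableSpace.comap (Y' i) mM]
            (prodZ Y' t) :=
          ih.mono (biSup_mono (Set.Icc_subset_Icc_right (by omega))) le_rfl
        exact h1.mul h2
  have hind : ∀ t, IndepFun (Y' (t+1)) (prodZ Y' t) μ := by
    intro t
    have hdisj : Disjoint (Set.Icc 1 t) ({t+1} : Set ℕ) := by
      rw [Set.disjoint_singleton_right]
      simp only [Set.mem_Icc]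
      omega
    have hIndep := indep_iSup_of_disjoint
      (m := fun i => MeasurableSpace.comap (Y' i) mM) hcomap_le hindep'.iIndep hdisj
    have hP : IndepFun (prodZ Y' t) (Y' (t+1)) μ := by
      rw [IndepFun_iff_Indep]
      refine indep_mono' hIndep (measurable_iff_comap_le.mp (hmeas_sup t)) ?_
      exact le_biSup (fun i => MeasurableSpace.comap (Y' i) mM) rfl
    exact hP.symm
  -- measurability helpers
  have mF : Measurable (fun A : EuclideanSpace ℝ (Fin d) →L[ℝ] EuclideanSpace ℝ (Fin d) =>
      ENNReal.ofReal (frobSq A)) :=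
    ENNReal.measurable_ofReal.comp continuous_frobSq.measurable
  have mmul : Measurable (fun p :
      (EuclideanSpace ℝ (Fin d) →L[ℝ] EuclideanSpace ℝ (Fin d)) ×
      (EuclideanSpace ℝ (Fin d) →L[ℝ] EuclideanSpace ℝ (Fin d)) =>
      ENNReal.ofReal (frobSq (p.1 * p.2))) :=
    ENNReal.measurable_ofReal.comp ((continuous_frobSq.comp continuous_mul).measurable)
  -- the key lintegral recursion
  set L : ℕ → ENNReal := fun t => ∫⁻ ω, ENNReal.ofReal (frobSq (prodZ Y' t ω)) ∂μ with hLdef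
  have key : ∀ t, L (t+1) ≤ ENNReal.ofReal c * L t := by
    intro t
    have hprob1 : IsProbabilityMeasure (μ.map (Y' (t+1))) :=
      Measure.isProbabilityMeasure_map (hY'meas (t+1)).aemeasurable
    have hprob2 : IsProbabilityMeasure (μ.map (prodZ Y' t)) :=
      Measure.isProbabilityMeasure_map (hPmeas t).aemeasurable
    have hpair : Measurable (fun ω => (Y' (t+1) ω, prodZ Y' t ω)) :=
      (hY'meas (t+1)).prodMk (hPmeas t)
    have hmap : μ.map (fun ω => (Y' (t+1) ω, prodZ Y' t ω))
        = (μ.map (Y' (t+1))).prod (μ.map (prodZ Y' t)) :=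
      (indepFun_iff_map_prod_eq_prod_map_map (hY'meas (t+1)).aemeasurable
        (hPmeas t).aemeasurable).mp (hind t)
    have inner_bound : ∀ z : EuclideanSpace ℝ (Fin d) →L[ℝ] EuclideanSpace ℝ (Fin d),
        (∫⁻ ω, ENNReal.ofReal (frobSq (Y' (t+1) ω * z)) ∂μ)
          ≤ ENNReal.ofReal (c * frobSq z) := by
      intro z
      have hfe : ∀ ω, ENNReal.ofReal (frobSq (Y' (t+1) ω * z))
          = ∑ j : Fin d,
              ENNReal.ofReal (‖Y' (t+1) ω (z (EuclideanSpace.single j 1))‖ ^ 2) := by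
        intro ω
        rw [show frobSq (Y' (t+1) ω * z)
            = ∑ j : Fin d, ‖Y' (t+1) ω (z (EuclideanSpace.single j 1))‖ ^ 2 by
          unfold frobSq; simp [ContinuousLinearMap.mul_apply]]
        exact ENNReal.ofReal_sum_of_nonneg fun j _ => by positivity
      have hmj : ∀ j : Fin d, Measurable (fun ω =>
          ENNReal.ofReal (‖Y' (t+1) ω (z (EuclideanSpace.single j 1))‖ ^ 2)) := by
        intro j
        apply ENNReal.measurable_ofReal.comp
        have : Continuous (fun A : EuclideanSpace ℝ (Fin d) →L[ℝ] EuclideanSpace ℝ (Fin d) =>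
            ‖A (z (EuclideanSpace.single j 1))‖ ^ 2) := by fun_prop
        exact this.measurable.comp (hY'meas (t+1))
      calc (∫⁻ ω, ENNReal.ofReal (frobSq (Y' (t+1) ω * z)) ∂μ)
          = ∑ j : Fin d, ∫⁻ ω,
              ENNReal.ofReal (‖Y' (t+1) ω (z (EuclideanSpace.single j 1))‖ ^ 2) ∂μ := by
            simp_rw [hfe]
            exact lintegral_finset_sum _ fun j _ => hmj j
        _ ≤ ∑ j : Fin d, ENNReal.ofReal (c * ‖z (EuclideanSpace.single j 1)‖ ^ 2) := by
            refine Finset.sum_le_sum fun j _ => ?_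
            rw [← ofReal_integral_eq_lintegral_ofReal
              (hstep (t+1) (z (EuclideanSpace.single j 1))).1
              (Filter.Eventually.of_forall fun ω => by positivity)]
            exact ENNReal.ofReal_le_ofReal (hstep (t+1) (z (EuclideanSpace.single j 1))).2
        _ = ENNReal.ofReal (c * frobSq z) := by
            rw [← ENNReal.ofReal_sum_of_nonneg fun j _ => by positivity]
            congr 1
            rw [frobSq, Finset.mul_sum]
      done
    calc L (t+1)
        = ∫⁻ p, ENNReal.ofReal (frobSq (p.1 * p.2))
            ∂((μ.map (Y' (t+1))).prod (μ.map (prodZ Y' t))) := by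
          rw [hLdef, ← hmap, lintegral_map mmul hpair]
          rfl
      _ = ∫⁻ z, ∫⁻ w, ENNReal.ofReal (frobSq (w * z)) ∂(μ.map (Y' (t+1)))
            ∂(μ.map (prodZ Y' t)) := by
          rw [lintegral_prod_symm _ mmul.aemeasurable]
      _ ≤ ∫⁻ z, ENNReal.ofReal (c * frobSq z) ∂(μ.map (prodZ Y' t)) := by
          refine lintegral_mono fun z => ?_
          have hmw : Measurable (fun w :
              EuclideanSpace ℝ (Fin d) →L[ℝ] EuclideanSpace ℝ (Fin d) =>
              ENNReal.ofReal (frobSq (w * z))) := by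
            apply ENNReal.measurable_ofReal.comp
            have : Continuous (fun w :
                EuclideanSpace ℝ (Fin d) →L[ℝ] EuclideanSpace ℝ (Fin d) => frobSq (w * z)) :=
              continuous_frobSq.comp (continuous_mul_right z)
            exact this.measurable
          rw [lintegral_map hmw (hY'meas (t+1))]
          exact inner_bound z
      _ = ENNReal.ofReal c * ∫⁻ z, ENNReal.ofReal (frobSq z) ∂(μ.map (prodZ Y' t)) := by
          simp_rw [fun z => ENNReal.ofReal_mul (p := c) (q := frobSq z) hc0]
          rw [lintegral_const_mul _ mF]
      _ = ENNReal.ofReal c * L t := by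
          rw [hLdef, lintegral_map mF (hPmeas t)]
  have hLbound : ∀ t, L t ≤ ENNReal.ofReal d * (ENNReal.ofReal c) ^ t := by
    intro t
    induction t with
    | zero =>
        have : L 0 = ENNReal.ofReal d := by
          rw [hLdef]
          simp only [prodZ, frobSq_one]
          rw [lintegral_const]
          simp
        rw [this]; simp
    | succ t ih =>
        calc L (t+1) ≤ ENNReal.ofReal c * L t := key t
          _ ≤ ENNReal.ofReal c * (ENNReal.ofReal d * (ENNReal.ofReal c) ^ t) := by gcongr
          _ = ENNReal.ofReal d * (ENNReal.ofReal c) ^ (t+1) := by ring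
  -- conclusion
  intro t
  have hLne : L t ≠ ⊤ := by
    refine ne_top_of_le_ne_top ?_ (hLbound t)
    exact ENNReal.mul_ne_top ENNReal.ofReal_ne_top (ENNReal.pow_ne_top ENNReal.ofReal_ne_top)
  have hfrob_eq : (∫ ω, frobSq (Z t ω) ∂μ) = (L t).toReal := by
    rw [integral_congr_ae (g := fun ω => frobSq (prodZ Y' t ω))
      (by filter_upwards [hZ'ae t] with ω h; rw [h])]
    rw [hLdef, integral_eq_lintegral_of_nonneg_ae
      (Filter.Eventually.of_forall fun ω => frobSq_nonneg _)
      (continuous_frobSq.comp_aestronglyMeasurable (hPmeas t).aestronglyMeasurable)]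
  have hbound2 : (∫ ω, frobSq (Z t ω) ∂μ) ≤ d * c ^ t := by
    rw [hfrob_eq]
    calc (L t).toReal ≤ (ENNReal.ofReal d * (ENNReal.ofReal c) ^ t).toReal :=
          ENNReal.toReal_mono
            (ENNReal.mul_ne_top ENNReal.ofReal_ne_top
              (ENNReal.pow_ne_top ENNReal.ofReal_ne_top)) (hLbound t)
      _ = d * c ^ t := by
          rw [ENNReal.toReal_mul, ENNReal.toReal_pow, ENNReal.toReal_ofReal (by positivity),
            ENNReal.toReal_ofReal hc0]
  refine ⟨?_, hbound2⟩
  have hnorm_eq : (∫ ω, ‖Z t ω‖ ^ 2 ∂μ)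
      = (∫⁻ ω, ENNReal.ofReal (‖prodZ Y' t ω‖ ^ 2) ∂μ).toReal := by
    rw [integral_congr_ae (g := fun ω => ‖prodZ Y' t ω‖ ^ 2)
      (by filter_upwards [hZ'ae t] with ω h; rw [h])]
    rw [integral_eq_lintegral_of_nonneg_ae (f := fun ω => ‖prodZ Y' t ω‖ ^ 2)
      (Filter.Eventually.of_forall fun ω => by positivity)
      (((continuous_norm.pow 2)).comp_aestronglyMeasurable (hPmeas t).aestronglyMeasurable)]
  rw [hnorm_eq, hfrob_eq]
  refine ENNReal.toReal_mono hLne (lintegral_mono fun ω => ?_)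
  exact ENNReal.ofReal_le_ofReal (norm_sq_le_frobSq _)

end
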